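/- Suppose there exists i₀ with max(z_{i₀},0) < ‖w‖, ∑_i max(−z_i,0) < ‖w‖, and λ > 0 satisfies λ‖w‖ = ∑_i max(‖w‖ − (λ+1)z_i, 0). Then the projection of (−z,−w) onto M is ([z − ‖w‖/(λ+1) e]^−, −λw/(λ+1)). -/

import Mathlib

open RealInnerProductSpace

private lemma proj_expand {E : Type*} [NormedAddCommGroup E] [InnerProductSpace ℝ E]
    (x b a : E) : ‖x - a‖^2 = ‖x - b‖^2 + 2*⟪x-b, b-a⟫ + ‖b-a‖^2 := by
  have h : x - a = (x - b) + (b - a) := by abel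
  rw [h, norm_add_sq_real]

set_option maxHeartbeats 1000000 in
theorem proj_M_case3
    (p q : ℕ) (hp : 0 < p) (hq : 0 < q)
    (M : Set (EuclideanSpace ℝ (Fin p) × EuclideanSpace ℝ (Fin q)))
    (hM : M = {yv | ‖yv.2‖ ≤ ∑ i : Fin p, yv.1 i ∧ ∀ i : Fin p, 0 ≤ yv.1 i})
    (z : EuclideanSpace ℝ (Fin p)) (w : EuclideanSpace ℝ (Fin q)) (hw : w ≠ 0)
    (h1 : ∃ i : Fin p, max (z i) 0 < ‖w‖)
    (h2 : ∑ i : Fin p, max (-z i) 0 < ‖w‖)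
    (lam : ℝ) (hlam : 0 < lam)
    (heq : lam * ‖w‖ = ∑ i : Fin p, max (‖w‖ - (lam + 1) * z i) 0) :
    (((WithLp.equiv 2 _).symm (fun i => max (-(z i - ‖w‖ / (lam + 1))) 0),
        (-(lam / (lam + 1))) • w) ∈ M ∧
      (∀ a ∈ M,
        ‖(-z) - (WithLp.equiv 2 _).symm (fun i => max (-(z i - ‖w‖ / (lam + 1))) 0)‖ ^ 2
            + ‖(-w) - (-(lam / (lam + 1))) • w‖ ^ 2
          ≤ ‖(-z) - a.1‖ ^ 2 + ‖(-w) - a.2‖ ^ 2)) ∧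
      ∀ b ∈ M, (∀ a ∈ M, ‖(-z) - b.1‖ ^ 2 + ‖(-w) - b.2‖ ^ 2 ≤ ‖(-z) - a.1‖ ^ 2 + ‖(-w) - a.2‖ ^ 2) →
        b = ((WithLp.equiv 2 _).symm (fun i => max (-(z i - ‖w‖ / (lam + 1))) 0),
          (-(lam / (lam + 1))) • w) := by
  classical
  have hl1 : (0:ℝ) < lam + 1 := by linarith
  have hwpos : (0:ℝ) < ‖w‖ := norm_pos_iff.mpr hw
  set c : ℝ := ‖w‖ / (lam + 1) with hc
  have hcpos : 0 < c := div_pos hwpos hl1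
  have hcw : (lam + 1) * c = ‖w‖ := by rw [hc, mul_div_assoc', mul_div_cancel_left₀ _ hl1.ne']
  set b1 : EuclideanSpace ℝ (Fin p) :=
    (WithLp.equiv 2 (Fin p → ℝ)).symm (fun i => max (-(z i - ‖w‖ / (lam + 1))) 0) with hb1
  set b2 : EuclideanSpace ℝ (Fin q) := (-(lam / (lam + 1))) • w with hb2
  have hb1i : ∀ i, b1 i = max (c - z i) 0 := by
    intro i
    simp only [hb1, neg_sub, hc]
    rfl
  have hb1nn : ∀ i, 0 ≤ b1 i := fun i => (hb1i i) ▸ le_max_right _ _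
  -- sum of b1
  have hsum : ∑ i, b1 i = lam * ‖w‖ / (lam + 1) := by
    have hper : ∀ i : Fin p, (lam + 1) * b1 i = max (‖w‖ - (lam + 1) * z i) 0 := by
      intro i
      rw [hb1i i, mul_max_of_nonneg _ _ hl1.le, mul_zero]
      congr 1
      rw [mul_sub, hcw]
    have : (lam + 1) * ∑ i, b1 i = lam * ‖w‖ := by
      rw [Finset.mul_sum]
      rw [heq]
      exact Finset.sum_congr rfl (fun i _ => hper i)
    field_simp
    linarith [this]
  -- norm of b2
  have hnb2 : ‖b2‖ = lam * ‖w‖ / (lam + 1) := by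
    rw [hb2, norm_smul]
    simp only [Real.norm_eq_abs, abs_neg, abs_div]
    rw [abs_of_pos hlam, abs_of_pos hl1]
    ring
  -- membership
  have hmemb : (b1, b2) ∈ M := by
    rw [hM]
    exact ⟨by rw [hnb2, hsum], hb1nn⟩
  -- the residual
  set d1 : EuclideanSpace ℝ (Fin p) := (-z) - b1 with hd1
  set d2 : EuclideanSpace ℝ (Fin q) := (-w) - b2 with hd2
  have hd1i : ∀ i, d1 i = -z i - max (c - z i) 0 := by
    intro i; simp [hd1, hb1i i]
  have hd1le : ∀ i, d1 i ≤ -c := by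
    intro i; rw [hd1i i]
    have := le_max_left (c - z i) 0
    linarith
  have hd2eq : d2 = (-(1/(lam+1))) • w := by
    rw [hd2, hb2]
    match_scalars
    field_simp
    ring
  have hnd2 : ‖d2‖ = c := by
    rw [hd2eq, norm_smul]
    simp only [Real.norm_eq_abs, abs_neg, abs_div, abs_one]
    rw [abs_of_pos hl1, hc]
    ring
  -- inner products with b
  have hib1 : ⟪d1, b1⟫ = -c * (lam * ‖w‖ / (lam + 1)) := by
    rw [← hsum, Finset.mul_sum]
    rw [PiLp.inner_apply]
    refine Finset.sum_congr rfl (fun i _ => ?_)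
    simp only [RCLike.inner_apply, conj_trivial]
    rw [hd1i i, hb1i i]
    rcases le_or_gt (z i) c with h | h
    · rw [max_eq_left (by linarith)]; ring
    · rw [max_eq_right (by linarith)]; ring
  have hib2 : ⟪d2, b2⟫ = c * (lam * ‖w‖ / (lam + 1)) := by
    rw [hd2eq, hb2, real_inner_smul_left, real_inner_smul_right,
      real_inner_self_eq_norm_sq]
    rw [hc]
    field_simp
  have hibsum : ⟪d1, b1⟫ + ⟪d2, b2⟫ = 0 := by rw [hib1, hib2]; ring
  -- inner products with arbitrary a ∈ M
  have hia : ∀ a : EuclideanSpace ℝ (Fin p) × EuclideanSpace ℝ (Fin q), a ∈ M →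
      ⟪d1, a.1⟫ + ⟪d2, a.2⟫ ≤ 0 := by
    intro a ha
    rw [hM] at ha
    obtain ⟨hna, hnn⟩ := ha
    have h1' : ⟪d1, a.1⟫ ≤ -c * ∑ i, a.1 i := by
      rw [PiLp.inner_apply, Finset.mul_sum]
      refine Finset.sum_le_sum (fun i _ => ?_)
      simp only [RCLike.inner_apply, conj_trivial]
      rw [mul_comm (a.1 i) (d1 i)]
      exact mul_le_mul_of_nonneg_right (hd1le i) (hnn i)
    have h2' : ⟪d2, a.2⟫ ≤ c * ‖a.2‖ := by
      calc ⟪d2, a.2⟫ ≤ ‖d2‖ * ‖a.2‖ := real_inner_le_norm _ _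
        _ = c * ‖a.2‖ := by rw [hnd2]
    have h3' : c * ‖a.2‖ ≤ c * ∑ i, a.1 i := mul_le_mul_of_nonneg_left hna hcpos.le
    linarith
  -- variational inequality
  have hvar : ∀ a : EuclideanSpace ℝ (Fin p) × EuclideanSpace ℝ (Fin q), a ∈ M →
      0 ≤ ⟪d1, b1 - a.1⟫ + ⟪d2, b2 - a.2⟫ := by
    intro a ha
    rw [inner_sub_right, inner_sub_right]
    have := hia a ha
    linarith [hibsum]
  -- minimality
  have hmin : ∀ a ∈ M, ‖(-z) - b1‖ ^ 2 + ‖(-w) - b2‖ ^ 2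
      ≤ ‖(-z) - a.1‖ ^ 2 + ‖(-w) - a.2‖ ^ 2 := by
    intro a ha
    have e1 := proj_expand (-z) b1 a.1
    have e2 := proj_expand (-w) b2 a.2
    have hv := hvar a ha
    simp only [← hd1, ← hd2] at e1 e2 hv ⊢
    nlinarith [sq_nonneg ‖b1 - a.1‖, sq_nonneg ‖b2 - a.2‖]
  refine ⟨⟨hmemb, hmin⟩, ?_⟩
  -- uniqueness
  intro b hbM hbmin
  have hfb : ‖(-z) - b.1‖ ^ 2 + ‖(-w) - b.2‖ ^ 2 = ‖(-z) - b1‖ ^ 2 + ‖(-w) - b2‖ ^ 2 :=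
    le_antisymm (hbmin (b1, b2) hmemb) (hmin b hbM)
  -- midpoint
  set m1 : EuclideanSpace ℝ (Fin p) := (1/2 : ℝ) • (b1 + b.1) with hm1
  set m2 : EuclideanSpace ℝ (Fin q) := (1/2 : ℝ) • (b2 + b.2) with hm2
  rw [hM] at hbM
  obtain ⟨hbn, hbnn⟩ := hbM
  have hmmem : (m1, m2) ∈ M := by
    rw [hM]
    constructor
    · have : ∑ i, m1 i = (1/2) * (∑ i, b1 i + ∑ i, b.1 i) := by
        rw [← Finset.sum_add_distrib, Finset.mul_sum]
        exact Finset.sum_congr rfl (fun i _ => by simp [hm1]; ring)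
      rw [this]
      calc ‖m2‖ ≤ (1/2) * (‖b2‖ + ‖b.2‖) := by
            rw [hm2, norm_smul]
            simp only [Real.norm_eq_abs]
            rw [abs_of_pos (by norm_num : (0:ℝ) < 1/2)]
            have := norm_add_le b2 b.2
            linarith
        _ ≤ (1/2) * (∑ i, b1 i + ∑ i, b.1 i) := by
            have hbb : ‖b2‖ = ∑ i, b1 i := by rw [hnb2, hsum]
            linarith [hbn]
    · intro i
      show (0:ℝ) ≤ m1 i
      have hmi : m1 i = 2⁻¹ * b1 i + 2⁻¹ * b.1 i := by simp [hm1]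
      rw [hmi]
      have := hb1nn i
      have := hbnn i
      positivity
  -- parallelogram
  have par1 : 4 * ‖(-z) - m1‖^2 + ‖b.1 - b1‖^2 = 2*‖(-z) - b1‖^2 + 2*‖(-z) - b.1‖^2 := by
    have hmeq : (-z) - m1 = (1/2 : ℝ) • (((-z) - b1) + ((-z) - b.1)) := by
      rw [hm1]; match_scalars <;> ring
    have hdiff : ((-z) - b1) - ((-z) - b.1) = b.1 - b1 := by abel
    rw [hmeq, norm_smul]
    have h1 := norm_add_sq_real ((-z) - b1) ((-z) - b.1)
    have h2 := norm_sub_sq_real ((-z) - b1) ((-z) - b.1)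
    rw [hdiff] at h2
    simp only [Real.norm_eq_abs]
    rw [abs_of_pos (by norm_num : (0:ℝ) < 1/2)]
    rw [mul_pow]
    norm_num
    linarith [h1, h2]
  have par2 : 4 * ‖(-w) - m2‖^2 + ‖b.2 - b2‖^2 = 2*‖(-w) - b2‖^2 + 2*‖(-w) - b.2‖^2 := by
    have hmeq : (-w) - m2 = (1/2 : ℝ) • (((-w) - b2) + ((-w) - b.2)) := by
      rw [hm2]; match_scalars <;> ring
    have hdiff : ((-w) - b2) - ((-w) - b.2) = b.2 - b2 := by abel
    rw [hmeq, norm_smul]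
    have h1 := norm_add_sq_real ((-w) - b2) ((-w) - b.2)
    have h2 := norm_sub_sq_real ((-w) - b2) ((-w) - b.2)
    rw [hdiff] at h2
    simp only [Real.norm_eq_abs]
    rw [abs_of_pos (by norm_num : (0:ℝ) < 1/2)]
    rw [mul_pow]
    norm_num
    linarith [h1, h2]
  have hmge : ‖(-z) - b1‖ ^ 2 + ‖(-w) - b2‖ ^ 2 ≤ ‖(-z) - m1‖ ^ 2 + ‖(-w) - m2‖ ^ 2 :=
    hmin (m1, m2) hmmem
  have hz1 : ‖b.1 - b1‖^2 + ‖b.2 - b2‖^2 ≤ 0 := by nlinarith [par1, par2, hmge, hfb]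
  have e1 : b.1 = b1 := by
    have : ‖b.1 - b1‖ = 0 := by nlinarith [sq_nonneg ‖b.1 - b1‖, sq_nonneg ‖b.2 - b2‖, norm_nonneg (b.1 - b1), norm_nonneg (b.2 - b2)]
    have := norm_eq_zero.mp this
    exact sub_eq_zero.mp this
  have e2 : b.2 = b2 := by
    have : ‖b.2 - b2‖ = 0 := by nlinarith [sq_nonneg ‖b.1 - b1‖, sq_nonneg ‖b.2 - b2‖, norm_nonneg (b.1 - b1), norm_nonneg (b.2 - b2)]
    have := norm_eq_zero.mp this
    exact sub_eq_zero.mp this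
  exact Prod.ext e1 e2
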